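/- In a level-1 phylogenetic network N on a finite set X, let Y be a subset of X with at least two elements, let u be a lowest common ancestor of Y, and let w = lsa(Y). If u ≺ w, then no directed path from w to u contains a cut arc; consequently u and w lie on a common cycle of the underlying undirected graph of N. -/

import Mathlib

open Relation

/-- A rooted phylogenetic network on a finite taxa set `X` with vertex type `V`:
a finite simple acyclic digraph with a unique root (indegree 0, reaching every
vertex), no vertices with indegree 1 and outdegree 1, whose leaves (outdegree-0
vertices) are bijectively labelled by `X`. -/
structure PhyloNetwork (V X : Type) [Fintype V] [Fintype X] where
  /-- arc relation of the digraph -/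
  Adj : V → V → Prop
  /-- acyclicity: no directed cycle -/
  acyclic : ∀ v, ¬ Relation.TransGen Adj v v
  /-- the root -/
  root : V
  /-- the root has indegree 0 -/
  root_no_parent : ∀ u, ¬ Adj u root
  /-- every vertex is reachable from the root by a directed path -/
  root_reaches : ∀ v, Relation.ReflTransGen Adj root v
  /-- no vertex has indegree 1 and outdegree 1 -/
  no_degenerate : ∀ v, ¬ ({u | Adj u v}.ncard = 1 ∧ {u | Adj v u}.ncard = 1)
  /-- the leaves are bijectively labelled by the taxa in `X` -/
  label : X ≃ {v : V // ∀ u, ¬ Adj v u}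

namespace PhyloNetwork

variable {V X : Type} [Fintype V] [Fintype X] (N : PhyloNetwork V X)

/-- a leaf is a vertex of outdegree 0 -/
def IsLeaf (v : V) : Prop := ∀ u, ¬ N.Adj v u

/-- the leaf labelled by taxon `x` -/
def leaf (x : X) : V := (N.label x).val

/-- `u` is below `v` (equivalently, `v` is above `u`): there is a directed
path from `v` to `u` -/
def below (u v : V) : Prop := Relation.ReflTransGen N.Adj v u

/-- `u` is strictly below `v` -/
def strictlyBelow (u v : V) : Prop := N.below u v ∧ u ≠ v

/-- the cluster of a vertex: the set of taxa labelling the leaves below it -/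
def cluster (v : V) : Set X := {x | N.below (N.leaf x) v}

/-- a common ancestor of a set `Y` of taxa -/
def CommonAncestor (Y : Set X) (v : V) : Prop := Y ⊆ N.cluster v

/-- a lowest common ancestor (LCA) of `Y`: a common ancestor of `Y` such that
no other common ancestor of `Y` is strictly below it -/
def IsLCA (Y : Set X) (v : V) : Prop :=
  N.CommonAncestor Y v ∧ ∀ u, N.CommonAncestor Y u → ¬ N.strictlyBelow u v

/-- `p` is a directed path from `u` to `v`, recorded as its list of vertices -/
def IsDipath (p : List V) (u v : V) : Prop :=
  p ≠ [] ∧ p.head? = some u ∧ p.getLast? = some v ∧ p.Chain' N.Adj ∧ p.Nodup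

/-- the arc `(a, b)` is traversed by the path `p` -/
def ArcIn (p : List V) (a b : V) : Prop := (a, b) ∈ p.zip p.tail

/-- a stable ancestor of `Y`: a vertex contained in every directed path from
the root to some taxon in `Y` -/
def StableAncestor (Y : Set X) (v : V) : Prop :=
  ∀ x ∈ Y, ∀ p : List V, N.IsDipath p N.root (N.leaf x) → v ∈ p

/-- the lowest stable ancestor (LSA) of `Y`: the stable ancestor of `Y`
that is below every stable ancestor of `Y` -/
def IsLSA (Y : Set X) (w : V) : Prop :=
  N.StableAncestor Y w ∧ ∀ v, N.StableAncestor Y v → N.below w v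

/-- the underlying undirected graph of the network -/
def underlying : SimpleGraph V := SimpleGraph.fromRel N.Adj

/-- indegree of a vertex -/
noncomputable def inDeg (v : V) : ℕ := {u | N.Adj u v}.ncard

/-- outdegree of a vertex -/
noncomputable def outDeg (v : V) : ℕ := {u | N.Adj v u}.ncard

/-- binary network: every non-leaf vertex has indegree at most 2 and
outdegree at most 2, and every vertex of indegree 2 has outdegree 1 -/
def Binary : Prop :=
  (∀ v, ¬ N.IsLeaf v → N.inDeg v ≤ 2 ∧ N.outDeg v ≤ 2) ∧
  (∀ v, N.inDeg v = 2 → N.outDeg v = 1)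

/-- level-1 network: binary, and any two cycles of the underlying undirected
graph are vertex-disjoint (i.e. any two cycles sharing a vertex have the same
vertex set) -/
def Level1 : Prop :=
  N.Binary ∧ ∀ (u v : V) (c₁ : N.underlying.Walk u u) (c₂ : N.underlying.Walk v v),
    c₁.IsCycle → c₂.IsCycle → ∀ w, w ∈ c₁.support → w ∈ c₂.support →
      ∀ z, (z ∈ c₁.support ↔ z ∈ c₂.support)

/-- a cut arc: an arc whose removal disconnects the underlying undirected graph -/
def CutArc (a b : V) : Prop :=
  N.Adj a b ∧ ¬ (SimpleGraph.fromRel (fun u v => N.Adj u v ∧ ¬ (u = a ∧ v = b))).Connected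

/-- a splitting ancestor of distinct taxa `x` and `y`: a (non-leaf) vertex such
that precisely one taxon from `{x, y}` is below both of its children, while the
other taxon is below exactly one of its two children -/
def SplittingAncestor (x y : X) (v : V) : Prop :=
  ∃ c₁ c₂, c₁ ≠ c₂ ∧ N.Adj v c₁ ∧ N.Adj v c₂ ∧
    ((N.below (N.leaf x) c₁ ∧ N.below (N.leaf x) c₂ ∧
        Xor' (N.below (N.leaf y) c₁) (N.below (N.leaf y) c₂)) ∨
     (N.below (N.leaf y) c₁ ∧ N.below (N.leaf y) c₂ ∧
        Xor' (N.below (N.leaf x) c₁) (N.below (N.leaf x) c₂)))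

/-- saturated level-1 network: each non-leaf vertex is contained in a cycle of
size three of the underlying undirected graph -/
def Saturated : Prop :=
  ∀ v, ¬ N.IsLeaf v → ∃ c : N.underlying.Walk v v, c.IsCycle ∧ c.length = 3

/-- the multiset of clusters induced by the vertices of the network -/
noncomputable def clusterMultiset : Multiset (Set X) :=
  (Finset.univ : Finset V).val.map N.cluster

/-- the Robinson–Foulds distance: the size of the symmetric difference of the
multisets of clusters of the two networks -/
noncomputable def rfDist {V V' X : Type} [Fintype V] [Fintype V'] [Fintype X]
    (N : PhyloNetwork V X) (N' : PhyloNetwork V' X) : ℕ :=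
  letI : DecidableEq (Set X) := Classical.decEq _
  ((N.clusterMultiset - N'.clusterMultiset) +
    (N'.clusterMultiset - N.clusterMultiset)).card

end PhyloNetwork

section Aux

open Relation PhyloNetwork

variable {V X : Type} [Fintype V] [Fintype X]

/-- consecutive pairs in a `Chain'` list are related -/
lemma chain'_of_zip {R : V → V → Prop} :
    ∀ (l : List V) {a b : V}, (a, b) ∈ l.zip l.tail → l.Chain' R → R a b := by
  intro l
  induction l with
  | nil => intro a b h; simp at h
  | cons x xs ih =>
    intro a b h hc
    cases xs with
    | nil => simp at h
    | cons y ys =>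
      simp only [List.tail_cons, List.zip_cons_cons, List.mem_cons] at h
      rcases h with h | h
      · rw [Prod.mk.injEq] at h
        obtain ⟨rfl, rfl⟩ := h
        exact hc.rel_head
      · exact ih h hc.tail

lemma chain'_head_reaches {R : V → V → Prop} :
    ∀ (l : List V) (hd : V), l.head? = some hd → l.Chain' R →
      ∀ c ∈ l, ReflTransGen R hd c := by
  intro l
  induction l with
  | nil => intro hd h; simp at h
  | cons x xs ih =>
    intro hd h hc c hcmem
    simp only [List.head?_cons, Option.some.injEq] at h
    subst h
    rcases List.mem_cons.mp hcmem with rfl | hcm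
    · exact ReflTransGen.refl
    · cases xs with
      | nil => simp at hcm
      | cons y ys =>
        exact (ReflTransGen.single hc.rel_head).trans (ih y rfl hc.tail c hcm)

lemma chain'_reaches_last {R : V → V → Prop} :
    ∀ (l : List V) (u : V), l.getLast? = some u → l.Chain' R →
      ∀ c ∈ l, ReflTransGen R c u := by
  intro l
  induction l with
  | nil => intro u h; simp at h
  | cons x xs ih =>
    intro u h hc c hcmem
    cases xs with
    | nil =>
      simp only [List.getLast?_singleton, Option.some.injEq] at h
      subst h
      simp only [List.mem_singleton] at hcmem
      subst hcmem; exact ReflTransGen.refl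
    | cons y ys =>
      have h' : (y :: ys).getLast? = some u := by
        rw [← h]; exact (List.getLast?_cons_cons ..).symm
      rcases List.mem_cons.mp hcmem with rfl | hcm
      · exact (ReflTransGen.single hc.rel_head).trans (ih u h' hc.tail y (by simp))
      · exact ih u h' hc.tail c hcm

lemma reflTransGen_reachable {G : SimpleGraph V} {x y : V}
    (h : ReflTransGen G.Adj x y) : G.Reachable x y := by
  induction h with
  | refl => rfl
  | tail _ hadj ih => exact ih.trans hadj.reachable

/-- A list chain whose consecutive (member) pairs are adjacencies of `G` gives
reachability from head to any member. -/
lemma chain'_imp_mem {R S : V → V → Prop} :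
    ∀ (l : List V), l.Chain' R → (∀ c ∈ l, ∀ d ∈ l, R c d → S c d) → l.Chain' S := by
  intro l
  induction l with
  | nil => intro _ _; exact List.isChain_nil
  | cons x xs ih =>
    intro hc himp
    cases xs with
    | nil => exact List.isChain_singleton x
    | cons y ys =>
      refine List.isChain_cons_cons.mpr ⟨himp x (by simp) y (by simp) hc.rel_head, ?_⟩
      exact ih hc.tail (fun c hc' d hd' => himp c (by simp [hc']) d (by simp [hd']))

variable (N : PhyloNetwork V X)

lemma not_adj_self {a : V} : ¬ N.Adj a a := fun h => N.acyclic a (TransGen.single h)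

lemma not_adj_both {a b : V} (h : N.Adj a b) : ¬ N.Adj b a :=
  fun h' => N.acyclic a ((TransGen.single h).tail h')

/-- Key lemma: an arc `(a,b)` with `b` strictly below the LSA `w` of `Y` and
above an LCA-reachable point `u` with `Y ⊆ cluster u` is not a cut arc. -/
lemma not_cutArc (Y : Set X) (u w : V) (hu : N.CommonAncestor Y u)
    (hw : N.IsLSA Y w) {a b : V}
    (hbu : ReflTransGen N.Adj b u) (hwb : TransGen N.Adj w b) :
    ¬ N.CutArc a b := by
  rintro ⟨hab, hdisc⟩
  set G' : SimpleGraph V := SimpleGraph.fromRel (fun x y => N.Adj x y ∧ ¬ (x = a ∧ y = b)) with hG'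
  -- `b` is a stable ancestor of `Y`
  have hstab : N.StableAncestor Y b := by
    intro x hx q hq
    by_contra hbq
    -- build connectivity of G', contradicting hdisc
    apply hdisc
    -- from b, everything below b is G'-reachable avoiding the arc (a,b)
    have down : ∀ z, ReflTransGen N.Adj b z → G'.Reachable b z := by
      intro z hz
      induction hz with
      | refl => rfl
      | @tail c d hbc hcd ih =>
        refine ih.trans (SimpleGraph.Adj.reachable ?_)
        rw [hG', SimpleGraph.fromRel_adj]
        refine ⟨fun hcd' => N.acyclic d (TransGen.single (hcd' ▸ hcd)), Or.inl ⟨hcd, ?_⟩⟩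
        rintro ⟨h1, h2⟩
        subst h1; subst h2
        exact N.acyclic _ (TransGen.tail' hbc hcd)
    -- the dipath q avoids b, hence lies in G'
    obtain ⟨hqne, hqhd, hqlast, hqch, hqnd⟩ := hq
    have hqch' : q.Chain' G'.Adj := by
      refine chain'_imp_mem q hqch (fun c hcm d hdm hcd => ?_)
      rw [hG', SimpleGraph.fromRel_adj]
      refine ⟨fun hcd' => N.acyclic d (TransGen.single (hcd' ▸ hcd)), Or.inl ⟨hcd, ?_⟩⟩
      rintro ⟨h1, h2⟩
      exact hbq (h2 ▸ hdm)
    have hrx : G'.Reachable N.root (N.leaf x) := by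
      have hlx : N.leaf x ∈ q := List.mem_of_getLast? hqlast
      exact reflTransGen_reachable (chain'_head_reaches q N.root hqhd hqch' _ hlx)
    -- b reaches leaf x (below u, below b)
    have hbx : G'.Reachable b (N.leaf x) := down _ (hbu.trans (hu hx))
    have hrootb : G'.Reachable N.root b := hrx.trans hbx.symm
    -- every vertex is G'-reachable from root
    have key : ∀ z, G'.Reachable N.root z := by
      intro z
      have hz := N.root_reaches z
      induction hz with
      | refl => rfl
      | @tail c d hrc hcd ih =>
        by_cases hcase : c = a ∧ d = b
        · exact hcase.2 ▸ hrootb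
        · refine ih.trans (SimpleGraph.Adj.reachable ?_)
          rw [hG', SimpleGraph.fromRel_adj]
          exact ⟨fun h => N.acyclic d (TransGen.single (h ▸ hcd)), Or.inl ⟨hcd, hcase⟩⟩
    have : Nonempty V := ⟨N.root⟩
    exact ⟨fun y z => (key y).symm.trans (key z)⟩
  -- so w is below b, but b is strictly below w : directed cycle
  have hwbelow : N.below w b := hw.2 b hstab
  exact N.acyclic w (TransGen.trans_left hwb hwbelow)

/-- a non-cut arc lies on a cycle of the underlying graph -/
lemma cycle_of_not_cutArc {a b : V} (hab : N.Adj a b) (h : ¬ N.CutArc a b) :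
    ∃ (z : V) (c : N.underlying.Walk z z), c.IsCycle ∧ a ∈ c.support ∧ b ∈ c.support := by
  set G' : SimpleGraph V := SimpleGraph.fromRel (fun x y => N.Adj x y ∧ ¬ (x = a ∧ y = b)) with hG'
  have hconn : G'.Connected := by
    by_contra hc
    exact h ⟨hab, hc⟩
  have hne : a ≠ b := fun h' => N.acyclic b (TransGen.single (h' ▸ hab))
  -- a path from b to a in G'
  haveI := Classical.decEq V
  obtain ⟨w0⟩ := hconn.preconnected b a
  obtain ⟨p, hp⟩ : ∃ p : G'.Walk b a, p.IsPath := ⟨w0.toPath.1, w0.toPath.2⟩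
  -- transfer to underlying graph
  have hle : ∀ e ∈ p.edges, e ∈ N.underlying.edgeSet := by
    intro e he
    have := p.edges_subset_edgeSet he
    revert this
    refine Sym2.ind (fun x y hxy => ?_) e
    rw [SimpleGraph.mem_edgeSet, SimpleGraph.fromRel_adj] at hxy
    rw [PhyloNetwork.underlying, SimpleGraph.mem_edgeSet, SimpleGraph.fromRel_adj]
    exact ⟨hxy.1, hxy.2.imp (fun h => h.1) (fun h => h.1)⟩
  set p' : N.underlying.Walk b a := p.transfer N.underlying hle with hp'
  have hadj : N.underlying.Adj a b := by
    rw [PhyloNetwork.underlying, SimpleGraph.fromRel_adj]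
    exact ⟨hne, Or.inl hab⟩
  have hedge : s(a, b) ∉ p'.edges := by
    rw [hp', SimpleGraph.Walk.edges_transfer]
    intro hmem
    have := p.edges_subset_edgeSet hmem
    rw [SimpleGraph.mem_edgeSet, hG', SimpleGraph.fromRel_adj] at this
    rcases this.2 with h1 | h1
    · exact h1.2 ⟨rfl, rfl⟩
    · exact not_adj_both N hab h1.1
  refine ⟨a, SimpleGraph.Walk.cons hadj p', ?_, ?_, ?_⟩
  · exact (SimpleGraph.Walk.cons_isCycle_iff p' hadj).mpr ⟨hp.transfer hle, hedge⟩
  · simp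
  · rw [SimpleGraph.Walk.support_cons]
    right
    rw [hp', SimpleGraph.Walk.support_transfer]
    exact p.start_mem_support

lemma cycle_chain (hN : N.Level1) (Y : Set X) (u w : V)
    (hu : N.CommonAncestor Y u) (hw : N.IsLSA Y w) :
    ∀ b, TransGen N.Adj w b → ReflTransGen N.Adj b u →
      ∃ (z : V) (c : N.underlying.Walk z z), c.IsCycle ∧ w ∈ c.support ∧ b ∈ c.support := by
  intro b htg
  induction htg with
  | @single b hwb =>
    intro hbu
    exact cycle_of_not_cutArc N hwb (not_cutArc N Y u w hu hw hbu (TransGen.single hwb))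
  | @tail b c h1 hbc ih =>
    intro hcu
    have hbu : ReflTransGen N.Adj b u := ReflTransGen.head hbc hcu
    obtain ⟨z1, c1, hc1, hwc1, hbc1⟩ := ih hbu
    obtain ⟨z2, c2, hc2, hbc2, hcc2⟩ :=
      cycle_of_not_cutArc N hbc (not_cutArc N Y u w hu hw hcu (h1.tail hbc))
    have hsup := hN.2 z1 z2 c1 c2 hc1 hc2 b hbc1 hbc2
    exact ⟨z1, c1, hc1, hwc1, (hsup c).mpr hcc2⟩

end Aux

/-- In a level-1 phylogenetic network `N` on a finite set `X`, let
`Y` be a subset of `X` with at least two elements, let `u` be a lowest common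
ancestor of `Y`, and let `w = lsa(Y)`. If `u ≺ w`, then no directed path from
`w` to `u` contains a cut arc; consequently `u` and `w` lie on a common cycle
of the underlying undirected graph of `N`. -/
theorem no_cutarc_and_common_cycle {V X : Type} [Fintype V] [Fintype X]
    (N : PhyloNetwork V X) (hN : N.Level1) (Y : Set X) (hY : 2 ≤ Y.ncard)
    (u w : V) (hu : N.IsLCA Y u) (hw : N.IsLSA Y w)
    (huw : N.strictlyBelow u w) :
    (∀ p : List V, N.IsDipath p w u → ∀ a b, PhyloNetwork.ArcIn p a b → ¬ N.CutArc a b) ∧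
    (∃ (z : V) (c : N.underlying.Walk z z), c.IsCycle ∧
        u ∈ c.support ∧ w ∈ c.support) := by
  obtain ⟨hwu, hne⟩ := huw
  constructor
  · rintro p ⟨hpne, hph, hpl, hpc, hpn⟩ a b harc
    have hab : N.Adj a b := chain'_of_zip p harc hpc
    have hbmem : b ∈ p := List.mem_of_mem_tail (List.of_mem_zip harc).2
    have hamem : a ∈ p := (List.of_mem_zip harc).1
    have hbu : ReflTransGen N.Adj b u := chain'_reaches_last p u hpl hpc b hbmem
    have hwa : ReflTransGen N.Adj w a := chain'_head_reaches p w hph hpc a hamem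
    exact not_cutArc N Y u w hu.1 hw hbu (TransGen.tail' hwa hab)
  · have htg : TransGen N.Adj w u := by
      rcases reflTransGen_iff_eq_or_transGen.mp hwu with rfl | h
      · exact absurd rfl hne
      · exact h
    obtain ⟨z, c, hc, hwmem, humem⟩ := cycle_chain N hN Y u w hu.1 hw u htg ReflTransGen.refl
    exact ⟨z, c, hc, humem, hwmem⟩
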